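/- Let p, q be holomorphic on Ω \ {z₀} (Ω ⊂ ℂ a bounded domain with analytic boundary curves C₁,…,C_n) such that Re p is constant on each C_k and Im q is constant on each C_k. Then for each boundary curve C_k, Re ∮_{C_k} (p dq − q dp) = 0. -/

import Mathlib

open Set Complex intervalIntegral

theorem stmt8 (U : Set ℂ) (hU : IsOpen U)
    -- an analytic closed boundary curve contained in `U`
    (γ : ℝ → ℂ)
    (hγa : ∀ t, AnalyticAt ℝ γ t)
    (hγp : Function.Periodic γ (2 * Real.pi))
    (hγi : Set.InjOn γ (Set.Ico 0 (2 * Real.pi)))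
    (hγd : ∀ t, deriv γ t ≠ 0)
    (hγU : Set.range γ ⊆ U)
    (p q : ℂ → ℂ)
    (hp : DifferentiableOn ℂ p U) (hq : DifferentiableOn ℂ q U)
    (c₁ c₂ : ℝ)
    (hre : ∀ t, (p (γ t)).re = c₁)
    (him : ∀ t, (q (γ t)).im = c₂) :
    (∫ t in (0:ℝ)..(2 * Real.pi),
      (p (γ t) * deriv q (γ t) - q (γ t) * deriv p (γ t)) * deriv γ t).re = 0 := by
  have hmem : ∀ t, γ t ∈ U := fun t => hγU (mem_range_self t)
  have hγd' : ∀ t, HasDerivAt γ (deriv γ t) t := fun t => (hγa t).differentiableAt.hasDerivAt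
  have hpa : ∀ t, AnalyticAt ℂ p (γ t) := fun t => hp.analyticAt (hU.mem_nhds (hmem t))
  have hqa : ∀ t, AnalyticAt ℂ q (γ t) := fun t => hq.analyticAt (hU.mem_nhds (hmem t))
  -- derivative of p ∘ γ
  have hPd : ∀ t, HasDerivAt (fun s => p (γ s)) (deriv p (γ t) * deriv γ t) t := by
    intro t
    have h1 : HasDerivAt p (deriv p (γ t)) (γ t) := (hpa t).differentiableAt.hasDerivAt
    have := (h1.hasFDerivAt.restrictScalars ℝ).comp_hasDerivAt t (hγd' t)
    simpa [mul_comm, Function.comp_def] using this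
  have hQd : ∀ t, HasDerivAt (fun s => q (γ s)) (deriv q (γ t) * deriv γ t) t := by
    intro t
    have h1 : HasDerivAt q (deriv q (γ t)) (γ t) := (hqa t).differentiableAt.hasDerivAt
    have := (h1.hasFDerivAt.restrictScalars ℝ).comp_hasDerivAt t (hγd' t)
    simpa [mul_comm, Function.comp_def] using this
  -- Re p ∘ γ is constant, so (p' γ')·re = 0
  have hPre : ∀ t, (deriv p (γ t) * deriv γ t).re = 0 := by
    intro t
    have h1 : HasDerivAt (fun s => (p (γ s)).re) ((deriv p (γ t) * deriv γ t).re) t :=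
      (Complex.reCLM.hasFDerivAt.comp_hasDerivAt t (hPd t))
    have h2 : HasDerivAt (fun _ : ℝ => c₁) (0 : ℝ) t := hasDerivAt_const t c₁
    have : (fun s => (p (γ s)).re) = fun _ : ℝ => c₁ := funext hre
    rw [this] at h1
    exact h1.unique h2
  have hQim : ∀ t, (deriv q (γ t) * deriv γ t).im = 0 := by
    intro t
    have h1 : HasDerivAt (fun s => (q (γ s)).im) ((deriv q (γ t) * deriv γ t).im) t :=
      (Complex.imCLM.hasFDerivAt.comp_hasDerivAt t (hQd t))
    have h2 : HasDerivAt (fun _ : ℝ => c₂) (0 : ℝ) t := hasDerivAt_const t c₂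
    have : (fun s => (q (γ s)).im) = fun _ : ℝ => c₂ := funext him
    rw [this] at h1
    exact h1.unique h2
  set g : ℝ → ℂ := fun t => (p (γ t) * deriv q (γ t) - q (γ t) * deriv p (γ t)) * deriv γ t
    with hg
  -- F and its derivative
  set F : ℝ → ℝ := fun t => c₁ * (q (γ t)).re + c₂ * (p (γ t)).im with hF
  have hFd : ∀ t, HasDerivAt F ((g t).re) t := by
    intro t
    have h1 : HasDerivAt (fun s => (q (γ s)).re) ((deriv q (γ t) * deriv γ t).re) t :=
      Complex.reCLM.hasFDerivAt.comp_hasDerivAt t (hQd t)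
    have h2 : HasDerivAt (fun s => (p (γ s)).im) ((deriv p (γ t) * deriv γ t).im) t :=
      Complex.imCLM.hasFDerivAt.comp_hasDerivAt t (hPd t)
    have h3 := (h1.const_mul c₁).add (h2.const_mul c₂)
    have heq : (g t).re = c₁ * (deriv q (γ t) * deriv γ t).re
        + c₂ * (deriv p (γ t) * deriv γ t).im := by
      have e3 := hPre t
      have e4 := hQim t
      simp only [hg, ← hre t, ← him t]
      simp only [Complex.sub_re, Complex.mul_re, Complex.mul_im, Complex.sub_im] at e3 e4 ⊢
      linear_combination (-(p (γ t)).im) * e4 + (-(q (γ t)).re) * e3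
    rw [heq]
    exact h3
  -- continuity of g
  have hgc : Continuous g := by
    rw [continuous_iff_continuousAt]
    intro t
    have hγc : ContinuousAt γ t := (hγa t).continuousAt
    have h1 : ContinuousAt (fun s => p (γ s)) t := ((hpa t).continuousAt).comp hγc
    have h2 : ContinuousAt (fun s => q (γ s)) t := ((hqa t).continuousAt).comp hγc
    have hpA : AnalyticOnNhd ℂ p U := hp.analyticOnNhd hU
    have hqA : AnalyticOnNhd ℂ q U := hq.analyticOnNhd hU
    have hγA : AnalyticOnNhd ℝ γ Set.univ := fun s _ => hγa s
    have h3 : ContinuousAt (fun s => deriv p (γ s)) t :=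
      ((hpA.deriv _ (hmem t)).continuousAt).comp hγc
    have h4 : ContinuousAt (fun s => deriv q (γ s)) t :=
      ((hqA.deriv _ (hmem t)).continuousAt).comp hγc
    have h5 : ContinuousAt (deriv γ) t := (hγA.deriv _ (mem_univ t)).continuousAt
    exact (((h1.mul h4).sub (h2.mul h3)).mul h5)
  have hgint : IntervalIntegrable g MeasureTheory.volume 0 (2 * Real.pi) :=
    hgc.intervalIntegrable _ _
  have key : (∫ t in (0:ℝ)..(2 * Real.pi), g t).re
      = ∫ t in (0:ℝ)..(2 * Real.pi), (g t).re := by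
    exact (Complex.reCLM.intervalIntegral_comp_comm hgint).symm
  rw [key]
  have := intervalIntegral.integral_eq_sub_of_hasDerivAt
    (f := F) (f' := fun t => (g t).re) (a := 0) (b := 2 * Real.pi)
    (fun t _ => hFd t)
    ((Complex.continuous_re.comp hgc).intervalIntegrable _ _)
  rw [this]
  have hper : γ (2 * Real.pi) = γ 0 := by
    have := hγp 0
    simpa using this
  simp [hF, hper]
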